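/- Let p be a prime with p ≡ 3 (mod 4), let A = diag(1, 1, p), and let SO(3)_p = {L ∈ M₃(ℚ_p) : LᵀAL = A, det L = 1}. Let e₁, e₂, e₃ be the standard basis vectors of ℚ_p³. Then there exists M ∈ SO(3)_p which admits no Cardano decomposition of the form x–z–y: there do not exist X, Z, Y ∈ SO(3)_p with X e₁ = e₁, Z e₃ = e₃, Y e₂ = e₂ and M = X·Z·Y. -/

import Mathlib

open Matrix

private lemma p_mul_sq_ne_one (p : ℕ) [Fact p.Prime] (w : ℚ_[p]) :
    (p : ℚ_[p]) * w ^ 2 ≠ 1 := by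
  intro h
  have hp0 : (p : ℚ_[p]) ≠ 0 := by
    exact_mod_cast Nat.cast_ne_zero.mpr (Fact.out : p.Prime).pos.ne'
  have hw : w ≠ 0 := by
    rintro rfl
    simp at h
  have hval := congrArg Padic.valuation h
  rw [Padic.valuation_mul hp0 (pow_ne_zero 2 hw), Padic.valuation_p, sq,
    Padic.valuation_mul hw hw, Padic.valuation_one] at hval
  omega

/-- For `p ≡ 3 (mod 4)` and `A = diag(1, 1, p)`, there is an
`M ∈ SO(3)_p` that admits no Cardano decomposition of the form x–z–y. -/
theorem no_xzy_cardano_three_mod_four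
    (p : ℕ) [Fact p.Prime] (hp : p % 4 = 3)
    (A : Matrix (Fin 3) (Fin 3) ℚ_[p])
    (hA : A = Matrix.diagonal ![1, 1, (p : ℚ_[p])])
    (SO3 : Set (Matrix (Fin 3) (Fin 3) ℚ_[p]))
    (hSO3 : SO3 = {L | Lᵀ * A * L = A ∧ L.det = 1})
    (e : Fin 3 → (Fin 3 → ℚ_[p])) (he : ∀ i, e i = Pi.single i 1) :
    ∃ M ∈ SO3, ¬ ∃ X Z Y, X ∈ SO3 ∧ Z ∈ SO3 ∧ Y ∈ SO3 ∧
      X.mulVec (e 0) = e 0 ∧ Z.mulVec (e 2) = e 2 ∧ Y.mulVec (e 1) = e 1 ∧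
      M = X * Z * Y := by
  subst hA hSO3
  have hc : ((p : ℚ_[p]) + 1) ≠ 0 := by
    have h1 : ((p : ℚ_[p]) + 1) = ((p + 1 : ℕ) : ℚ_[p]) := by push_cast; ring
    rw [h1, Nat.cast_ne_zero]
    exact Nat.succ_ne_zero p
  have hp0 : (p : ℚ_[p]) ≠ 0 := by
    exact_mod_cast Nat.cast_ne_zero.mpr (Fact.out : p.Prime).pos.ne'
  set c : ℚ_[p] := (p : ℚ_[p]) + 1 with hcdef
  refine ⟨!![0, ((p : ℚ_[p]) - 1)/c, 2*(p : ℚ_[p])/c;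
            1, 0, 0;
            0, 2/c, (1 - (p : ℚ_[p]))/c], ⟨?_, ?_⟩, ?_⟩
  · -- MᵀAM = A
    ext i j
    fin_cases i <;> fin_cases j <;>
      simp [Matrix.mul_apply, Fin.sum_univ_three, Matrix.diagonal,
        Matrix.vecHead, Matrix.vecTail] <;>
      field_simp <;> ring
  · -- det M = 1
    rw [Matrix.det_fin_three]
    simp [Matrix.vecHead, Matrix.vecTail]
    field_simp
    ring
  · rintro ⟨X, Z, Y, ⟨hXA, -⟩, ⟨hZA, -⟩, ⟨hYA, -⟩, hXe, hZe, hYe, hM⟩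
    -- columns fixed
    have hX10 : X 1 0 = 0 := by
      have := congrFun hXe 1; simpa [he, Matrix.mulVec_single] using this
    have hX20 : X 2 0 = 0 := by
      have := congrFun hXe 2; simpa [he, Matrix.mulVec_single] using this
    have hX00 : X 0 0 = 1 := by
      have := congrFun hXe 0; simpa [he, Matrix.mulVec_single] using this
    have hZ02 : Z 0 2 = 0 := by
      have := congrFun hZe 0; simpa [he, Matrix.mulVec_single] using this
    have hZ12 : Z 1 2 = 0 := by
      have := congrFun hZe 1; simpa [he, Matrix.mulVec_single] using this
    have hZ22 : Z 2 2 = 1 := by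
      have := congrFun hZe 2; simpa [he, Matrix.mulVec_single] using this
    have hY01 : Y 0 1 = 0 := by
      have := congrFun hYe 0; simpa [he, Matrix.mulVec_single] using this
    have hY11 : Y 1 1 = 1 := by
      have := congrFun hYe 1; simpa [he, Matrix.mulVec_single] using this
    have hY21 : Y 2 1 = 0 := by
      have := congrFun hYe 2; simpa [he, Matrix.mulVec_single] using this
    -- rows of X, Z, Y forced by the orthogonality relations
    have hX01 : X 0 1 = 0 := by
      have h := congrFun (congrFun hXA 0) 1
      simpa [Matrix.mul_apply, Fin.sum_univ_three, Matrix.diagonal,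
        hX00, hX10, hX20] using h
    have hX02 : X 0 2 = 0 := by
      have h := congrFun (congrFun hXA 0) 2
      simpa [Matrix.mul_apply, Fin.sum_univ_three, Matrix.diagonal,
        hX00, hX10, hX20] using h
    have hY10 : Y 1 0 = 0 := by
      have h := congrFun (congrFun hYA 1) 0
      simpa [Matrix.mul_apply, Fin.sum_univ_three, Matrix.diagonal,
        hY01, hY11, hY21] using h
    -- entries of M
    have hM00 : (X * Z * Y) 0 0 = 0 := by
      rw [← hM]; simp [Matrix.cons_val_zero]
    have hM02 : (X * Z * Y) 0 2 = 2*(p : ℚ_[p])/c := by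
      rw [← hM]; simp
    have h00 : Z 0 0 * Y 0 0 = 0 := by
      have h := hM00
      simp only [Matrix.mul_apply, Fin.sum_univ_three, hX00, hX01, hX02, hY10, hZ02] at h
      linear_combination h
    have hY12 : Y 1 2 = 0 := by
      have h := congrFun (congrFun hYA 1) 2
      simpa [Matrix.mul_apply, Fin.sum_univ_three, Matrix.diagonal,
        hY01, hY11, hY21] using h
    have h02 : Z 0 0 * Y 0 2 = 2*(p : ℚ_[p])/c := by
      have h := hM02
      simp only [Matrix.mul_apply, Fin.sum_univ_three, hX00, hX01, hX02, hZ02, hY12] at h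
      linear_combination h
    have hZ00 : Z 0 0 ≠ 0 := by
      intro h
      rw [h, zero_mul] at h02
      have : (2*(p : ℚ_[p])/c) ≠ 0 := by
        apply div_ne_zero _ hc
        exact mul_ne_zero two_ne_zero hp0
      exact this h02.symm
    have hY00 : Y 0 0 = 0 := by
      rcases mul_eq_zero.mp h00 with h | h
      · exact absurd h hZ00
      · exact h
    -- norm of the first column of Y gives p * (Y 2 0)^2 = 1
    have hnorm : (p : ℚ_[p]) * (Y 2 0) ^ 2 = 1 := by
      have h := congrFun (congrFun hYA 0) 0
      simp only [Matrix.mul_apply, Fin.sum_univ_three, Matrix.transpose_apply,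
        Matrix.diagonal] at h
      simp [hY00, hY10, Matrix.diagonal] at h
      linear_combination h
    exact p_mul_sq_ne_one p (Y 2 0) hnorm
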